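/- Each operator T_τ (for τ ∈ (0,1)), T+, and T− is pointwise monotone in its value function argument: if V1(s) ≤ V2(s) for all s, then (T_τ V1)(s) ≤ (T_τ V2)(s) for all s, and similarly for T+ and T−, provided γ ∈ [0,1) and 2α·max(τ,1−τ) ≤ 1. -/
import Mathlib

set_option maxHeartbeats 1000000

open Finset

private lemma fterm_le (a b : ℝ) (ha0 : 0 ≤ a) (ha1 : a ≤ 1) (hb0 : 0 ≤ b) (hb1 : b ≤ 1)
    {c γ u1 u2 w1 w2 : ℝ} (hγ : 0 ≤ γ) (hu : u1 ≤ u2) (hw : w1 ≤ w2) :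
    u1 + (a * max (c + γ * w1 - u1) 0 + b * min (c + γ * w1 - u1) 0) ≤
    u2 + (a * max (c + γ * w2 - u2) 0 + b * min (c + γ * w2 - u2) 0) := by
  have hgw : γ * w1 ≤ γ * w2 := mul_le_mul_of_nonneg_left hw hγ
  set x := c + γ * w1 - u1 with hx
  set y := c + γ * w1 - u2 with hy
  set z := c + γ * w2 - u2 with hz
  have hyx : y ≤ x := by simp [hx, hy]; linarith
  have hyz : y ≤ z := by simp [hy, hz]; linarith
  have h1 : a * max x 0 + b * min x 0 ≤ (x - y) + (a * max y 0 + b * min y 0) := by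
    rcases max_cases x (0:ℝ) with ⟨e1, l1⟩ | ⟨e1, l1⟩ <;>
    rcases min_cases x (0:ℝ) with ⟨e2, l2⟩ | ⟨e2, l2⟩ <;>
    rcases max_cases y (0:ℝ) with ⟨e3, l3⟩ | ⟨e3, l3⟩ <;>
    rcases min_cases y (0:ℝ) with ⟨e4, l4⟩ | ⟨e4, l4⟩ <;>
    (simp only [e1, e2, e3, e4]; try nlinarith)
  have h2 : a * max y 0 + b * min y 0 ≤ a * max z 0 + b * min z 0 := by
    rcases max_cases y (0:ℝ) with ⟨e1, l1⟩ | ⟨e1, l1⟩ <;>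
    rcases min_cases y (0:ℝ) with ⟨e2, l2⟩ | ⟨e2, l2⟩ <;>
    rcases max_cases z (0:ℝ) with ⟨e3, l3⟩ | ⟨e3, l3⟩ <;>
    rcases min_cases z (0:ℝ) with ⟨e4, l4⟩ | ⟨e4, l4⟩ <;>
    (simp only [e1, e2, e3, e4]; try nlinarith)
  have hxy : x - y = u2 - u1 := by rw [hx, hy]; ring
  linarith

private lemma sum_op_le {S A : Type*} [Fintype S] [Fintype A]
    (pol : S → A → ℝ) (P : S → A → S → ℝ) (R : S → A → S → ℝ) (γ a b : ℝ)
    (hpol0 : ∀ s a, 0 ≤ pol s a) (hpol1 : ∀ s, ∑ a, pol s a = 1)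
    (hP0 : ∀ s a s', 0 ≤ P s a s') (hP1 : ∀ s a, ∑ s', P s a s' = 1)
    (hγ0 : 0 ≤ γ) (ha0 : 0 ≤ a) (ha1 : a ≤ 1) (hb0 : 0 ≤ b) (hb1 : b ≤ 1)
    (V1 V2 : S → ℝ) (h12 : ∀ s, V1 s ≤ V2 s) (s : S) :
    V1 s + ∑ a', ∑ s', pol s a' * P s a' s' *
        (a * max (R s a' s' + γ * V1 s' - V1 s) 0 + b * min (R s a' s' + γ * V1 s' - V1 s) 0) ≤
    V2 s + ∑ a', ∑ s', pol s a' * P s a' s' *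
        (a * max (R s a' s' + γ * V2 s' - V2 s) 0 + b * min (R s a' s' + γ * V2 s' - V2 s) 0) := by
  have key : ∀ V : S → ℝ,
      V s + ∑ a', ∑ s', pol s a' * P s a' s' *
          (a * max (R s a' s' + γ * V s' - V s) 0 + b * min (R s a' s' + γ * V s' - V s) 0)
      = ∑ a', ∑ s', pol s a' * P s a' s' *
          (V s + (a * max (R s a' s' + γ * V s' - V s) 0 + b * min (R s a' s' + γ * V s' - V s) 0)) := by
    intro V
    have h1 : ∑ a', ∑ s', pol s a' * P s a' s' * V s = V s := by
      have h2 : ∀ a', ∑ s', pol s a' * P s a' s' * V s = pol s a' * V s := by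
        intro a'
        simp_rw [mul_assoc, ← Finset.mul_sum, ← Finset.sum_mul, hP1, one_mul]
      rw [Finset.sum_congr rfl fun a' _ => h2 a', ← Finset.sum_mul, hpol1, one_mul]
    simp_rw [mul_add, Finset.sum_add_distrib]
    rw [h1]
  rw [key V1, key V2]
  apply Finset.sum_le_sum
  intro a' _
  apply Finset.sum_le_sum
  intro s' _
  apply mul_le_mul_of_nonneg_left _ (mul_nonneg (hpol0 s a') (hP0 s a' s'))
  exact fterm_le a b ha0 ha1 hb0 hb1 hγ0 (h12 s) (h12 s')

/-- Each of `T_τ`, `T₊` and `T₋` is pointwise monotone in its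
value-function argument. -/
theorem operators_monotone_in_value {S A : Type*}
    [Fintype S] [Nonempty S] [Fintype A] [Nonempty A]
    (pol : S → A → ℝ) (P : S → A → S → ℝ) (R : S → A → S → ℝ) (γ α τ : ℝ)
    (hpol0 : ∀ s a, 0 ≤ pol s a) (hpol1 : ∀ s, ∑ a, pol s a = 1)
    (hP0 : ∀ s a s', 0 ≤ P s a s') (hP1 : ∀ s a, ∑ s', P s a s' = 1)
    (hγ0 : 0 ≤ γ) (hγ1 : γ < 1) (hτ0 : 0 < τ) (hτ1 : τ < 1)
    (hα0 : 0 < α) (hα : 2 * α * max τ (1 - τ) ≤ 1)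
    (Tτ Tp Tm : (S → ℝ) → (S → ℝ))
    (hTτ : ∀ V s, Tτ V s =
      V s + 2 * α * ∑ a, ∑ s', pol s a * P s a s' *
        (τ * max (R s a s' + γ * V s' - V s) 0
          + (1 - τ) * min (R s a s' + γ * V s' - V s) 0))
    (hTp : ∀ V s, Tp V s =
      V s + ∑ a, ∑ s', pol s a * P s a s' * max (R s a s' + γ * V s' - V s) 0)
    (hTm : ∀ V s, Tm V s =
      V s + ∑ a, ∑ s', pol s a * P s a s' * min (R s a s' + γ * V s' - V s) 0) :
    ∀ V1 V2 : S → ℝ, (∀ s, V1 s ≤ V2 s) →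
      (∀ s, Tτ V1 s ≤ Tτ V2 s) ∧ (∀ s, Tp V1 s ≤ Tp V2 s) ∧ (∀ s, Tm V1 s ≤ Tm V2 s) := by
  intro V1 V2 h12
  have h2α : (0:ℝ) ≤ 2 * α := by linarith
  have ha0 : (0:ℝ) ≤ 2 * α * τ := by nlinarith
  have ha1 : 2 * α * τ ≤ 1 :=
    le_trans (mul_le_mul_of_nonneg_left (le_max_left τ (1 - τ)) h2α) hα
  have hb0 : (0:ℝ) ≤ 2 * α * (1 - τ) := by nlinarith
  have hb1 : 2 * α * (1 - τ) ≤ 1 :=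
    le_trans (mul_le_mul_of_nonneg_left (le_max_right τ (1 - τ)) h2α) hα
  refine ⟨?_, ?_, ?_⟩
  · intro s
    have e : ∀ V : S → ℝ, ∀ s : S,
        V s + 2 * α * ∑ a, ∑ s', pol s a * P s a s' *
          (τ * max (R s a s' + γ * V s' - V s) 0
            + (1 - τ) * min (R s a s' + γ * V s' - V s) 0)
        = V s + ∑ a, ∑ s', pol s a * P s a s' *
          (2 * α * τ * max (R s a s' + γ * V s' - V s) 0
            + 2 * α * (1 - τ) * min (R s a s' + γ * V s' - V s) 0) := by
      intro V s
      congr 1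
      rw [Finset.mul_sum]
      refine Finset.sum_congr rfl fun a _ => ?_
      rw [Finset.mul_sum]
      refine Finset.sum_congr rfl fun s' _ => ?_
      ring
    rw [hTτ, hTτ, e V1 s, e V2 s]
    exact sum_op_le pol P R γ (2 * α * τ) (2 * α * (1 - τ)) hpol0 hpol1 hP0 hP1
      hγ0 ha0 ha1 hb0 hb1 V1 V2 h12 s
  · intro s
    have hp := sum_op_le pol P R γ 1 0 hpol0 hpol1 hP0 hP1 hγ0 zero_le_one le_rfl
      le_rfl zero_le_one V1 V2 h12 s
    simp only [one_mul, zero_mul, add_zero] at hp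
    rw [hTp, hTp]; exact hp
  · intro s
    have hm := sum_op_le pol P R γ 0 1 hpol0 hpol1 hP0 hP1 hγ0 le_rfl zero_le_one
      zero_le_one le_rfl V1 V2 h12 s
    simp only [one_mul, zero_mul, zero_add] at hm
    rw [hTm, hTm]; exact hm
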